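/- Let a₀, …, a_{N−1} : ℝ → ℂ and b₀, …, b_{M−1} : ℝ → ℂ be measurable with Σ_{n=0}^{N−1} |aₙ(x)|² = 1 for a.e. x ∈ ℝ and Σ_{m=0}^{M−1} |bₘ(y)|² = 1 for a.e. y ∈ ℝ. Define the separable multipliers m_{n,m}(ω₁, ω₂) = aₙ(ω₁)·bₘ(ω₂) on ℝ². Then for every f ∈ L²(ℝ²), Σ_{n=0}^{N−1} Σ_{m=0}^{M−1} ‖𝓕⁻¹( conj(m_{n,m}) · 𝓕(f) )‖_{L²}² = ‖f‖_{L²}²; i.e., the 2D tensor empirical wavelet family is a tight frame of L²(ℝ²). -/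

import Mathlib

set_option maxHeartbeats 1000000

open FourierTransform MeasureTheory

/-- Squared `L²` norm as an integral. -/
lemma Lp_norm_sq_eq_integral {α : Type*} [MeasurableSpace α] {μ : Measure α}
    (φ : Lp ℂ 2 μ) : ‖φ‖ ^ 2 = ∫ x, ‖φ x‖ ^ 2 ∂μ := by
  have h1 : ‖φ‖ ^ 2 = RCLike.re (inner (𝕜 := ℂ) φ φ) := norm_sq_eq_re_inner (𝕜 := ℂ) φ
  rw [h1, MeasureTheory.L2.inner_def, ← integral_re (MeasureTheory.L2.integrable_inner φ φ)]
  refine integral_congr_ae (Filter.Eventually.of_forall fun x => ?_)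
  exact inner_self_eq_norm_sq (𝕜 := ℂ) (φ x)

/-- `x ↦ ‖φ x‖ ^ 2` is integrable for `φ ∈ L²`. -/
lemma Lp_integrable_norm_sq {α : Type*} [MeasurableSpace α] {μ : Measure α}
    (φ : Lp ℂ 2 μ) : Integrable (fun x => ‖φ x‖ ^ 2) μ := by
  have h := MeasureTheory.L2.integrable_inner (𝕜 := ℂ) φ φ
  refine h.re.congr (Filter.Eventually.of_forall fun x => ?_)
  exact inner_self_eq_norm_sq (𝕜 := ℂ) (φ x)

/-- The 2D tensor empirical wavelet family is a tight frame of `L²(ℝ²)`: if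
`Σₙ |aₙ(x)|² = 1` a.e. and `Σₘ |bₘ(y)|² = 1` a.e., then for the separable
multipliers `m_{n,m}(ω₁,ω₂) = aₙ(ω₁)·bₘ(ω₂)` and every `f ∈ L²(ℝ²)`,
`Σₙ Σₘ ‖𝓕⁻¹(conj(m_{n,m})·𝓕 f)‖² = ‖f‖²`. -/
theorem tensor_EWT_tight_frame (N M : ℕ) (hN : 1 ≤ N) (hM : 1 ≤ M)
    (a b : ℕ → ℝ → ℂ)
    (ha_meas : ∀ n < N, Measurable (a n))
    (hb_meas : ∀ m < M, Measurable (b m))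
    (ha : ∀ᵐ x ∂(volume : Measure ℝ), ∑ n ∈ Finset.range N, ‖a n x‖ ^ 2 = 1)
    (hb : ∀ᵐ y ∂(volume : Measure ℝ), ∑ m ∈ Finset.range M, ‖b m y‖ ^ 2 = 1)
    (F : Lp ℂ 2 (volume : Measure (EuclideanSpace ℝ (Fin 2))) ≃ₗᵢ[ℂ]
      Lp ℂ 2 (volume : Measure (EuclideanSpace ℝ (Fin 2))))
    (hF : ∀ (f : EuclideanSpace ℝ (Fin 2) → ℂ) (hf1 : Integrable f)
      (hf2 : MemLp f 2 (volume : Measure (EuclideanSpace ℝ (Fin 2)))),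
      (F (hf2.toLp f) : EuclideanSpace ℝ (Fin 2) → ℂ) =ᵐ[volume] 𝓕 f) :
    ∀ (f : Lp ℂ 2 (volume : Measure (EuclideanSpace ℝ (Fin 2))))
      (g : ℕ → ℕ → Lp ℂ 2 (volume : Measure (EuclideanSpace ℝ (Fin 2)))),
      (∀ n < N, ∀ m < M,
        (g n m : EuclideanSpace ℝ (Fin 2) → ℂ) =ᵐ[volume]
          fun x => (starRingEnd ℂ) (a n (x 0) * b m (x 1)) *
            (F f : EuclideanSpace ℝ (Fin 2) → ℂ) x) →
      ∑ n ∈ Finset.range N, ∑ m ∈ Finset.range M, ‖F.symm (g n m)‖ ^ 2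
        = ‖f‖ ^ 2 := by
  intro f g hg
  have e_mp := EuclideanSpace.volume_preserving_symm_measurableEquiv_toLp (Fin 2)
  -- transfer the a.e. hypotheses to the plane
  have haE : ∀ᵐ x ∂(volume : Measure (EuclideanSpace ℝ (Fin 2))),
      ∑ n ∈ Finset.range N, ‖a n (x 0)‖ ^ 2 = 1 := by
    have hnull : (volume : Measure ℝ)
        {t : ℝ | ¬ (∑ n ∈ Finset.range N, ‖a n t‖ ^ 2 = 1)} = 0 := ha
    have hpi : (volume : Measure (Fin 2 → ℝ))
        (Function.eval 0 ⁻¹' {t : ℝ | ¬ (∑ n ∈ Finset.range N, ‖a n t‖ ^ 2 = 1)}) = 0 := by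
      rw [MeasureTheory.volume_pi]
      exact MeasureTheory.Measure.pi_eval_preimage_null _ hnull
    exact e_mp.quasiMeasurePreserving.preimage_null hpi
  have hbE : ∀ᵐ x ∂(volume : Measure (EuclideanSpace ℝ (Fin 2))),
      ∑ m ∈ Finset.range M, ‖b m (x 1)‖ ^ 2 = 1 := by
    have hnull : (volume : Measure ℝ)
        {t : ℝ | ¬ (∑ m ∈ Finset.range M, ‖b m t‖ ^ 2 = 1)} = 0 := hb
    have hpi : (volume : Measure (Fin 2 → ℝ))
        (Function.eval 1 ⁻¹' {t : ℝ | ¬ (∑ m ∈ Finset.range M, ‖b m t‖ ^ 2 = 1)}) = 0 := by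
      rw [MeasureTheory.volume_pi]
      exact MeasureTheory.Measure.pi_eval_preimage_null _ hnull
    exact e_mp.quasiMeasurePreserving.preimage_null hpi
  -- combine all a.e. statements
  have hg' : ∀ᵐ x ∂(volume : Measure (EuclideanSpace ℝ (Fin 2))),
      ∀ n ∈ Finset.range N, ∀ m ∈ Finset.range M,
      (g n m : EuclideanSpace ℝ (Fin 2) → ℂ) x
        = (starRingEnd ℂ) (a n (x 0) * b m (x 1)) *
            (F f : EuclideanSpace ℝ (Fin 2) → ℂ) x := by
    rw [Filter.eventually_all_finset]
    intro n hn
    rw [Filter.eventually_all_finset]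
    intro m hm
    exact hg n (Finset.mem_range.mp hn) m (Finset.mem_range.mp hm)
  have key : ∀ᵐ x ∂(volume : Measure (EuclideanSpace ℝ (Fin 2))),
      ∑ n ∈ Finset.range N, ∑ m ∈ Finset.range M,
        ‖(g n m : EuclideanSpace ℝ (Fin 2) → ℂ) x‖ ^ 2
      = ‖(F f : EuclideanSpace ℝ (Fin 2) → ℂ) x‖ ^ 2 := by
    filter_upwards [haE, hbE, hg'] with x hax hbx hgx
    have hterm : ∀ n ∈ Finset.range N, ∀ m ∈ Finset.range M,
        ‖(g n m : EuclideanSpace ℝ (Fin 2) → ℂ) x‖ ^ 2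
          = ‖a n (x 0)‖ ^ 2 * ‖b m (x 1)‖ ^ 2 *
              ‖(F f : EuclideanSpace ℝ (Fin 2) → ℂ) x‖ ^ 2 := by
      intro n hn m hm
      rw [hgx n hn m hm, norm_mul, RingHomIsometric.norm_map, norm_mul, mul_pow, mul_pow]
    rw [Finset.sum_congr rfl fun n hn => Finset.sum_congr rfl fun m hm => hterm n hn m hm]
    have : ∑ n ∈ Finset.range N, ∑ m ∈ Finset.range M,
        ‖a n (x 0)‖ ^ 2 * ‖b m (x 1)‖ ^ 2 *
          ‖(F f : EuclideanSpace ℝ (Fin 2) → ℂ) x‖ ^ 2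
        = (∑ n ∈ Finset.range N, ‖a n (x 0)‖ ^ 2) *
            (∑ m ∈ Finset.range M, ‖b m (x 1)‖ ^ 2) *
              ‖(F f : EuclideanSpace ℝ (Fin 2) → ℂ) x‖ ^ 2 := by
      rw [Finset.sum_mul_sum, Finset.sum_mul]
      exact Finset.sum_congr rfl fun n _ => by rw [Finset.sum_mul]
    rw [this, hax, hbx, one_mul, one_mul]
  -- put everything together
  have step : ∑ n ∈ Finset.range N, ∑ m ∈ Finset.range M, ‖g n m‖ ^ 2 = ‖F f‖ ^ 2 := by
    have lhs : ∑ n ∈ Finset.range N, ∑ m ∈ Finset.range M, ‖g n m‖ ^ 2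
        = ∫ x, ∑ n ∈ Finset.range N, ∑ m ∈ Finset.range M,
            ‖(g n m : EuclideanSpace ℝ (Fin 2) → ℂ) x‖ ^ 2 := by
      rw [integral_finset_sum _ (fun n hn => integrable_finset_sum _
        (fun m hm => Lp_integrable_norm_sq (g n m)))]
      refine Finset.sum_congr rfl fun n hn => ?_
      rw [integral_finset_sum _ (fun m hm => Lp_integrable_norm_sq (g n m))]
      exact Finset.sum_congr rfl fun m hm => Lp_norm_sq_eq_integral (g n m)
    rw [lhs, integral_congr_ae key, ← Lp_norm_sq_eq_integral (F f)]
  calc ∑ n ∈ Finset.range N, ∑ m ∈ Finset.range M, ‖F.symm (g n m)‖ ^ 2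
      = ∑ n ∈ Finset.range N, ∑ m ∈ Finset.range M, ‖g n m‖ ^ 2 := by
        refine Finset.sum_congr rfl fun n hn => Finset.sum_congr rfl fun m hm => ?_
        rw [F.symm.norm_map]
    _ = ‖F f‖ ^ 2 := step
    _ = ‖f‖ ^ 2 := by rw [F.norm_map]
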